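/- The subset $U=\{[\|\cdot\|_X]: \operatorname{Iso}_X=\{\operatorname{Id},-\operatorname{Id}\}\}$ of norms with trivial autoisometry group is open in the metric space $\mathcal{N}$ of equivalence classes of norms on $\mathbb{R}^n$ modulo positive scaling, equipped with the multiplicative distance $d([\|\cdot\|_X],[\|\cdot\|_Y])=\min\{\mu:\|\cdot\|_X\leq\lambda\|\cdot\|_Y\leq\mu\|\cdot\|_X\text{ for some }\lambda>0\}$: if a sequence of norms each admitting a linear autoisometry other than $\pm\operatorname{Id}$ converges to a norm $\|\cdot\|$, then $\|\cdot\|$ also admits a linear autoisometry other than $\pm\operatorname{Id}$. -/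

import Mathlib

open scoped Real

def IsQuasinorm {E : Type*} [AddCommGroup E] [Module ℝ E] (q : E → ℝ) : Prop :=
  (∀ x, 0 ≤ q x) ∧ (∀ x, q x = 0 ↔ x = 0) ∧
  (∀ (c : ℝ) (x : E), q (c • x) = |c| * q x) ∧
  ∃ k : ℝ, 0 < k ∧ ∀ x y, q (x + y) ≤ k * (q x + q y)

def IsNormFn {E : Type*} [AddCommGroup E] [Module ℝ E] (q : E → ℝ) : Prop :=
  (∀ x, 0 ≤ q x) ∧ (∀ x, q x = 0 ↔ x = 0) ∧
  (∀ (c : ℝ) (x : E), q (c • x) = |c| * q x) ∧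
  ∀ x y, q (x + y) ≤ q x + q y

def distSet {E : Type*} [AddCommGroup E] [Module ℝ E] (q r : E → ℝ) : Set ℝ :=
  {μ : ℝ | 1 ≤ μ ∧ ∃ l : ℝ, 0 < l ∧ ∀ x, q x ≤ l * r x ∧ l * r x ≤ μ * q x}

noncomputable def multDist {E : Type*} [AddCommGroup E] [Module ℝ E] (q r : E → ℝ) : ℝ :=
  sInf (distSet q r)

section basic
variable {E : Type*} [AddCommGroup E] [Module ℝ E] {q : E → ℝ}

lemma isnf_zero (hq : IsNormFn q) : q 0 = 0 := (hq.2.1 0).mpr rfl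

lemma isnf_neg (hq : IsNormFn q) (x : E) : q (-x) = q x := by
  have := hq.2.2.1 (-1) x
  simpa using this

lemma isnf_sum (hq : IsNormFn q) {ι : Type*} (s : Finset ι) (f : ι → E) :
    q (∑ i ∈ s, f i) ≤ ∑ i ∈ s, q (f i) := by
  classical
  induction s using Finset.induction with
  | empty => simp [isnf_zero hq]
  | insert a s hx ih =>
    rw [Finset.sum_insert hx, Finset.sum_insert hx]
    exact le_trans (hq.2.2.2 _ _) (by linarith)

lemma isnf_sub_le (hq : IsNormFn q) (x y : E) : q x - q y ≤ q (x - y) := by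
  have h := hq.2.2.2 (x - y) y
  simp only [sub_add_cancel] at h
  linarith

lemma isnf_abs_sub_le (hq : IsNormFn q) (x y : E) : |q x - q y| ≤ q (x - y) := by
  rcases abs_cases (q x - q y) with ⟨h, _⟩ | ⟨h, _⟩ <;> rw [h]
  · exact isnf_sub_le hq x y
  · have h1 := isnf_sub_le hq y x
    have h2 : q (y - x) = q (x - y) := by
      rw [← isnf_neg hq (x - y)]; congr 1; abel
    linarith

end basic

section euc
variable {n : ℕ} {q : EuclideanSpace ℝ (Fin n) → ℝ}

lemma euc_coord_le (x : EuclideanSpace ℝ (Fin n)) (i : Fin n) : |x i| ≤ ‖x‖ := by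
  rw [EuclideanSpace.norm_eq, ← Real.sqrt_sq_eq_abs]
  apply Real.sqrt_le_sqrt
  have := Finset.single_le_sum (f := fun j => ‖x j‖ ^ 2) (fun j _ => sq_nonneg _)
    (Finset.mem_univ i)
  simpa [Real.norm_eq_abs, sq_abs] using this

lemma isnf_upper (hq : IsNormFn q) : ∃ c2 : ℝ, 0 < c2 ∧ ∀ x, q x ≤ c2 * ‖x‖ := by
  classical
  set b := EuclideanSpace.basisFun (Fin n) ℝ with hb
  have hqn : ∀ i, 0 ≤ q (b i) := fun i => hq.1 _
  refine ⟨(∑ i, q (b i)) + 1,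
    by have h : (0:ℝ) ≤ ∑ i, q (b i) := Finset.sum_nonneg (fun i _ => hqn i); linarith,
    fun x => ?_⟩
  have hx : x = ∑ i, x i • (b i : EuclideanSpace ℝ (Fin n)) := by
    have := b.toBasis.sum_repr x
    exact (b.sum_repr x).symm
  calc q x = q (∑ i, x i • (b i : EuclideanSpace ℝ (Fin n))) := by rw [← hx]
    _ ≤ ∑ i, q (x i • (b i : EuclideanSpace ℝ (Fin n))) := isnf_sum hq _ _
    _ = ∑ i, |x i| * q (b i) := by
        refine Finset.sum_congr rfl fun i _ => ?_
        exact hq.2.2.1 (x i) (b i)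
    _ ≤ ∑ i, ‖x‖ * q (b i) := by
        refine Finset.sum_le_sum fun i _ => ?_
        exact mul_le_mul_of_nonneg_right (euc_coord_le x i) (hq.1 _)
    _ = (∑ i, q (b i)) * ‖x‖ := by
        rw [Finset.sum_mul]; exact Finset.sum_congr rfl fun i _ => mul_comm _ _
    _ ≤ ((∑ i, q (b i)) + 1) * ‖x‖ := by
        have h0 : (0:ℝ) ≤ ‖x‖ := norm_nonneg x
        have h1 : (0:ℝ) ≤ ∑ i, q (b i) := Finset.sum_nonneg fun i _ => hqn i
        nlinarith

lemma isnf_continuous (hq : IsNormFn q) : Continuous q := by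
  obtain ⟨c2, hc2, hub⟩ := isnf_upper hq
  rw [Metric.continuous_iff]
  intro x ε hε
  refine ⟨ε / c2, by positivity, fun y hy => ?_⟩
  have h1 : |q y - q x| ≤ q (y - x) := isnf_abs_sub_le hq y x
  have h2 : q (y - x) ≤ c2 * ‖y - x‖ := hub _
  have h3 : ‖y - x‖ < ε / c2 := by rwa [← dist_eq_norm]
  calc dist (q y) (q x) = |q y - q x| := Real.dist_eq _ _
    _ ≤ c2 * ‖y - x‖ := le_trans h1 h2
    _ < c2 * (ε / c2) := mul_lt_mul_of_pos_left h3 hc2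
    _ = ε := by field_simp

lemma isnf_lower (hq : IsNormFn q) (hn : 1 ≤ n) :
    ∃ c1 : ℝ, 0 < c1 ∧ ∀ x, c1 * ‖x‖ ≤ q x := by
  haveI : Nontrivial (EuclideanSpace ℝ (Fin n)) := by
    refine ⟨EuclideanSpace.single ⟨0, hn⟩ (1:ℝ), 0, ?_⟩
    intro h
    have := congrArg (fun v : EuclideanSpace ℝ (Fin n) => v ⟨0, hn⟩) h
    simp [EuclideanSpace.single_apply] at this
  have hne : (Metric.sphere (0 : EuclideanSpace ℝ (Fin n)) 1).Nonempty :=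
    NormedSpace.sphere_nonempty.mpr (by norm_num)
  obtain ⟨x0, hx0mem, hx0min⟩ :=
    (isCompact_sphere (0 : EuclideanSpace ℝ (Fin n)) 1).exists_isMinOn hne
      (isnf_continuous hq).continuousOn
  have hx0norm : ‖x0‖ = 1 := by simpa using hx0mem
  have hx0ne : x0 ≠ 0 := by intro h; rw [h] at hx0norm; simp at hx0norm
  have hpos : 0 < q x0 := lt_of_le_of_ne (hq.1 x0) (fun h => hx0ne ((hq.2.1 x0).mp h.symm))
  refine ⟨q x0, hpos, fun x => ?_⟩
  rcases eq_or_ne x 0 with rfl | hx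
  · simp [isnf_zero hq]
  · have hxn : 0 < ‖x‖ := norm_pos_iff.mpr hx
    have hmem : (‖x‖⁻¹ • x) ∈ Metric.sphere (0 : EuclideanSpace ℝ (Fin n)) 1 := by
      simp [norm_smul, abs_of_pos (inv_pos.mpr hxn), inv_mul_cancel₀ hxn.ne']
    have hmin := hx0min hmem
    have hq1 : q (‖x‖⁻¹ • x) = ‖x‖⁻¹ * q x := by
      rw [hq.2.2.1, abs_of_pos (inv_pos.mpr hxn)]
    simp only [Set.mem_setOf_eq, hq1] at hmin
    calc q x0 * ‖x‖ ≤ (‖x‖⁻¹ * q x) * ‖x‖ := mul_le_mul_of_nonneg_right hmin hxn.le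
      _ = q x := by field_simp

end euc

section escape
variable {E : Type*} [NormedAddCommGroup E] [NormedSpace ℝ E]

lemma pow_sub_one_eq (F : E →L[ℝ] E) (m : ℕ) :
    F ^ m - 1 = m • (F - 1) + (∑ j ∈ Finset.range m, (F ^ j - 1)) * (F - 1) := by
  have h := geom_sum_mul F m
  have h2 : (∑ j ∈ Finset.range m, F ^ j) =
      (∑ j ∈ Finset.range m, (F ^ j - 1)) + (m : E →L[ℝ] E) := by
    rw [Finset.sum_sub_distrib]
    simp [Finset.sum_const]
  rw [← h, h2, add_mul]
  have : (m : E →L[ℝ] E) * (F - 1) = m • (F - 1) := by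
    simp [nsmul_eq_mul]
  rw [this]; abel

lemma escape_aux (C : ℝ) (hC : 1 ≤ C) (hone : ‖(1 : E →L[ℝ] E)‖ = 1)
    (F : E →L[ℝ] E) (hb : ∀ m : ℕ, ‖F ^ m‖ ≤ C) (hne1 : F ≠ 1)
    (hsmall : ‖F - 1‖ < 1 / (C + 1)) :
    ∃ m : ℕ, 1 / (C + 1) ≤ ‖F ^ m - 1‖ ∧ 1 / (C + 1) ≤ ‖F ^ m + 1‖ := by
  set δ : ℝ := 1 / (C + 1) with hδ
  have hCpos : (0:ℝ) < C + 1 := by linarith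
  have hδpos : 0 < δ := by positivity
  have hδhalf : δ ≤ 1 / 2 := by
    rw [hδ, div_le_div_iff₀ hCpos (by norm_num)]; linarith
  set a : ℝ := ‖F - 1‖ with hadef
  have ha : 0 < a := norm_pos_iff.mpr (sub_ne_zero.mpr hne1)
  have grow : ∀ m : ℕ, (∀ j < m, ‖F ^ j - 1‖ < δ) →
      (m : ℝ) * ((1 - δ) * a) ≤ ‖F ^ m - 1‖ := by
    intro m hm
    have key := pow_sub_one_eq F m
    have hA : ‖(m • (F - 1) : E →L[ℝ] E)‖ = (m : ℝ) * a := by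
      rw [← Nat.cast_smul_eq_nsmul ℝ, norm_smul]
      simp
      exact Or.inl rfl
    have hB : ‖(∑ j ∈ Finset.range m, (F ^ j - 1)) * (F - 1)‖ ≤ ((m : ℝ) * δ) * a := by
      calc ‖(∑ j ∈ Finset.range m, (F ^ j - 1)) * (F - 1)‖
          ≤ ‖∑ j ∈ Finset.range m, (F ^ j - 1)‖ * a := norm_mul_le _ _
        _ ≤ (∑ j ∈ Finset.range m, ‖F ^ j - 1‖) * a := by
            apply mul_le_mul_of_nonneg_right (norm_sum_le _ _) ha.le
        _ ≤ ((m : ℝ) * δ) * a := by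
            apply mul_le_mul_of_nonneg_right ?_ ha.le
            calc (∑ j ∈ Finset.range m, ‖F ^ j - 1‖)
                ≤ ∑ _j ∈ Finset.range m, δ := by
                  apply Finset.sum_le_sum
                  intro j hj
                  exact (hm j (Finset.mem_range.mp hj)).le
              _ = (m : ℝ) * δ := by simp [mul_comm]
    have hle : ‖(m • (F - 1) : E →L[ℝ] E)‖ ≤ ‖F ^ m - 1‖ +
        ‖(∑ j ∈ Finset.range m, (F ^ j - 1)) * (F - 1)‖ := by
      have heq : (m • (F - 1) : E →L[ℝ] E) =
          (F ^ m - 1) - (∑ j ∈ Finset.range m, (F ^ j - 1)) * (F - 1) := by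
        rw [key]; abel
      rw [heq]
      exact norm_sub_le _ _
    rw [hA] at hle
    nlinarith [norm_nonneg (F ^ m - 1)]
  have hs : ∃ m : ℕ, δ ≤ ‖F ^ m - 1‖ := by
    by_contra h
    push_neg at h
    obtain ⟨M, hM⟩ := exists_nat_ge (δ / ((1 - δ) * a))
    have h1δ : 0 < (1 - δ) * a := by nlinarith
    have hgr := grow M (fun j _ => h j)
    have : δ ≤ (M : ℝ) * ((1 - δ) * a) := by
      rw [div_le_iff₀ h1δ] at hM
      linarith
    linarith [h M]
  classical
  set m := Nat.find hs with hmdef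
  have hm : δ ≤ ‖F ^ m - 1‖ := Nat.find_spec hs
  have hmin : ∀ j < m, ‖F ^ j - 1‖ < δ := by
    intro j hj
    have := Nat.find_min hs hj
    push_neg at this
    exact this
  have hm0 : m ≠ 0 := by
    intro h0
    rw [h0] at hm
    simp at hm
    linarith
  obtain ⟨p, hp⟩ := Nat.exists_eq_succ_of_ne_zero hm0
  have hup : ‖F ^ m - 1‖ < 1 := by
    have hsplit : F ^ m - 1 = (F ^ p) * (F - 1) + (F ^ p - 1) := by
      rw [hp, pow_succ, mul_sub, mul_one]
      abel
    calc ‖F ^ m - 1‖ ≤ ‖(F ^ p) * (F - 1)‖ + ‖F ^ p - 1‖ := by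
          rw [hsplit]; exact norm_add_le _ _
      _ ≤ C * a + ‖F ^ p - 1‖ := by
          have h1 := norm_mul_le (F ^ p) (F - 1)
          have h2 := mul_le_mul_of_nonneg_right (hb p) ha.le
          gcongr
          exact le_trans h1 h2
      _ < C * δ + δ := by
          have hpm : p < m := by rw [hp]; exact Nat.lt_succ_self p
          have := hmin p hpm
          have h3 : C * a < C * δ := by
            apply mul_lt_mul_of_pos_left _ (by linarith)
            exact hsmall
          linarith
      _ = 1 := by rw [hδ]; field_simp
  refine ⟨m, hm, ?_⟩
  have htwo : ‖((2:ℝ) • (1 : E →L[ℝ] E))‖ = 2 := by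
    rw [norm_smul (2:ℝ) (1 : E →L[ℝ] E), hone]; norm_num
  have hsplit2 : F ^ m + 1 = (F ^ m - 1) + (2:ℝ) • (1 : E →L[ℝ] E) := by
    rw [two_smul]; abel
  have hfin : ‖((2:ℝ) • (1 : E →L[ℝ] E))‖ - ‖F ^ m - 1‖ ≤ ‖F ^ m + 1‖ := by
    rw [hsplit2]
    have := norm_sub_le ((F ^ m - 1) + (2:ℝ) • (1 : E →L[ℝ] E)) (F ^ m - 1)
    simp only [add_sub_cancel_left] at this
    linarith
  rw [htwo] at hfin
  linarith

lemma escape [Nontrivial E] (C : ℝ) (hC : 1 ≤ C) (F : E →L[ℝ] E)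
    (hb : ∀ m : ℕ, ‖F ^ m‖ ≤ C) (hne1 : F ≠ 1) (hne2 : F ≠ -1) :
    ∃ G : E →L[ℝ] E, (∃ m : ℕ, G = F ^ m ∨ G = -(F ^ m)) ∧
      1 / (C + 1) ≤ ‖G - 1‖ ∧ 1 / (C + 1) ≤ ‖G + 1‖ := by
  have hone : ‖(1 : E →L[ℝ] E)‖ = 1 := norm_one
  set δ : ℝ := 1 / (C + 1) with hδ
  by_cases hd1 : ‖F - 1‖ < δ
  · obtain ⟨m, h1, h2⟩ := escape_aux C hC hone F hb hne1 hd1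
    exact ⟨F ^ m, ⟨m, Or.inl rfl⟩, h1, h2⟩
  by_cases hd2 : ‖F + 1‖ < δ
  · have hb' : ∀ m : ℕ, ‖(-F) ^ m‖ ≤ C := by
      intro m
      rw [neg_pow]
      rcases neg_one_pow_eq_or (E →L[ℝ] E) m with h | h <;> rw [h] <;> simp [hb m]
    have hne1' : -F ≠ 1 := by
      intro h
      apply hne2
      rw [← neg_neg F, h]
    have hd1' : ‖-F - 1‖ < δ := by
      have heq : -F - 1 = -(F + 1) := by abel
      rw [heq, norm_neg]
      exact hd2
    obtain ⟨m, h1, h2⟩ := escape_aux C hC hone (-F) hb' hne1' hd1'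
    refine ⟨(-F) ^ m, ⟨m, ?_⟩, h1, h2⟩
    rw [neg_pow]
    rcases neg_one_pow_eq_or (E →L[ℝ] E) m with h | h <;> rw [h] <;> simp
  · push_neg at hd1 hd2
    exact ⟨F, ⟨1, Or.inl (pow_one F).symm⟩, hd1, hd2⟩

end escape

/-- The set of norms with trivial isometry group is open: its complement is closed. -/
theorem stmt17 {n : ℕ} (hn : 2 ≤ n) (Q : ℕ → (EuclideanSpace ℝ (Fin n) → ℝ))
    (hQ : ∀ k, IsNormFn (Q k))
    (q : EuclideanSpace ℝ (Fin n) → ℝ) (hq : IsNormFn q)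
    (hiso : ∀ k, ∃ F : EuclideanSpace ℝ (Fin n) →ₗ[ℝ] EuclideanSpace ℝ (Fin n),
      (∀ x, Q k (F x) = Q k x) ∧ F ≠ LinearMap.id ∧ F ≠ -LinearMap.id)
    (hconv : Filter.Tendsto (fun k => multDist (Q k) q) Filter.atTop (nhds 1)) :
    ∃ F : EuclideanSpace ℝ (Fin n) →ₗ[ℝ] EuclideanSpace ℝ (Fin n),
      (∀ x, q (F x) = q x) ∧ F ≠ LinearMap.id ∧ F ≠ -LinearMap.id := by
  classical
  have hn1 : 1 ≤ n := by omega
  haveI hnt : Nontrivial (EuclideanSpace ℝ (Fin n)) := by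
    haveI : Nonempty (Fin n) := ⟨⟨0, hn1⟩⟩
    refine ⟨EuclideanSpace.single ⟨0, hn1⟩ (1:ℝ), 0, fun h => ?_⟩
    have h2 : ‖EuclideanSpace.single (⟨0, hn1⟩ : Fin n) (1:ℝ)‖ = 0 := by rw [h, norm_zero]
    rw [EuclideanSpace.norm_single] at h2
    norm_num at h2
  obtain ⟨c1, hc1, hlow⟩ := isnf_lower hq hn1
  obtain ⟨c2, hc2, hupp⟩ := isnf_upper hq
  -- eventual bounds on multDist
  have hev : ∀ᶠ k in Filter.atTop, multDist (Q k) q ∈ Set.Ioo (1/2 : ℝ) (5/4) :=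
    hconv.eventually (Ioo_mem_nhds (by norm_num) (by norm_num))
  obtain ⟨N, hN⟩ := Filter.eventually_atTop.mp hev
  have hNk : ∀ k : ℕ, multDist (Q (k + N)) q ∈ Set.Ioo (1/2 : ℝ) (5/4) :=
    fun k => hN (k + N) (Nat.le_add_left N k)
  -- choose μ close to the infimum
  have hμex : ∀ k : ℕ, ∃ μ, μ ∈ distSet (Q (k + N)) q ∧
      μ < multDist (Q (k + N)) q + 1 / (k + 1) := by
    intro k
    have hne : (distSet (Q (k + N)) q).Nonempty := by
      by_contra h
      rw [Set.not_nonempty_iff_eq_empty] at h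
      have h0 : multDist (Q (k + N)) q = 0 := by
        rw [multDist, h, Real.sInf_empty]
      have h2 := (hNk k).1
      rw [h0] at h2
      norm_num at h2
    obtain ⟨a, ha, hlt⟩ := Real.lt_sInf_add_pos hne
      (show (0:ℝ) < 1 / (k + 1) by positivity)
    exact ⟨a, ha, hlt⟩
  choose μ hμmem hμlt using hμex
  have hμ1 : ∀ k, 1 ≤ μ k := fun k => (hμmem k).1
  have hμ3 : ∀ k, μ k ≤ 3 := by
    intro k
    have h1 := (hμlt k).le
    have h2 := (hNk k).2.le
    have h3 : (1:ℝ) / (k + 1) ≤ 1 := by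
      rw [div_le_one (by positivity)]
      have : (0:ℝ) ≤ k := Nat.cast_nonneg k
      linarith
    linarith
  choose l hlpos hl using fun k => (hμmem k).2
  -- normalized norms
  set r : ℕ → EuclideanSpace ℝ (Fin n) → ℝ := fun k x => Q (k + N) x / l k with hrdef
  have hrpos : ∀ k x, 0 ≤ r k x := fun k x => div_nonneg ((hQ (k + N)).1 x) (hlpos k).le
  have hrq : ∀ k x, r k x ≤ q x := by
    intro k x
    rw [hrdef]
    simp only
    rw [div_le_iff₀ (hlpos k)]
    have := (hl k x).1
    linarith [mul_comm (q x) (l k)]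
  have hqr : ∀ k x, q x ≤ μ k * r k x := by
    intro k x
    rw [hrdef]
    simp only
    rw [← mul_div_assoc, le_div_iff₀ (hlpos k)]
    have := (hl k x).2
    linarith [mul_comm (q x) (l k)]
  have hrneg : ∀ k x, r k (-x) = r k x := by
    intro k x
    rw [hrdef]
    simp only
    have h := (hQ (k + N)).2.2.1 (-1) x
    simp only [neg_smul, one_smul, abs_neg, abs_one, one_mul] at h
    rw [h]
  -- the isometries as continuous linear maps
  choose F hFiso hFid hFnid using hiso
  set G : ℕ → EuclideanSpace ℝ (Fin n) →L[ℝ] EuclideanSpace ℝ (Fin n) :=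
    fun k => LinearMap.toContinuousLinearMap (F (k + N)) with hGdef
  have hGapp : ∀ k x, G k x = F (k + N) x := fun k x => rfl
  have hGr : ∀ k x, r k (G k x) = r k x := by
    intro k x
    rw [hGapp, hrdef]
    simp only
    rw [hFiso (k + N) x]
  have hGrpow : ∀ k m x, r k ((G k ^ m) x) = r k x := by
    intro k m
    induction m with
    | zero => intro x; simp
    | succ m ih =>
      intro x
      rw [pow_succ]
      have h : ((G k ^ m) * (G k)) x = (G k ^ m) (G k x) := rfl
      rw [h, ih (G k x), hGr]
  set C : ℝ := max (3 * c2 / c1) 1 with hCdef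
  have hC : 1 ≤ C := le_max_right _ 1
  have hbound : ∀ k m, ‖(G k) ^ m‖ ≤ C := by
    intro k m
    apply ContinuousLinearMap.opNorm_le_bound _ (by linarith)
    intro x
    set y := (G k ^ m) x with hy
    have h1 : c1 * ‖y‖ ≤ q y := hlow y
    have h2 : q y ≤ μ k * r k y := hqr k y
    have h3 : r k y = r k x := hGrpow k m x
    have h4 : r k x ≤ q x := hrq k x
    have h5 : q x ≤ c2 * ‖x‖ := hupp x
    have h6 : 0 ≤ r k x := hrpos k x
    have h7 : q y ≤ 3 * (c2 * ‖x‖) := by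
      have h71 : μ k * r k x ≤ 3 * (c2 * ‖x‖) := by
        have := hμ3 k
        have := hμ1 k
        nlinarith
      rw [h3] at h2
      linarith
    have h8 : ‖y‖ ≤ (3 * c2 / c1) * ‖x‖ := by
      rw [div_mul_eq_mul_div, le_div_iff₀ hc1]
      nlinarith
    calc ‖y‖ ≤ (3 * c2 / c1) * ‖x‖ := h8
      _ ≤ C * ‖x‖ := mul_le_mul_of_nonneg_right (le_max_left _ _) (norm_nonneg x)
  have hGne1 : ∀ k, G k ≠ 1 := by
    intro k h
    apply hFid (k + N)
    refine LinearMap.ext fun x => ?_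
    have := congrArg (fun A : EuclideanSpace ℝ (Fin n) →L[ℝ] EuclideanSpace ℝ (Fin n) => A x) h
    simpa [hGapp] using this
  have hGne2 : ∀ k, G k ≠ -1 := by
    intro k h
    apply hFnid (k + N)
    refine LinearMap.ext fun x => ?_
    have := congrArg (fun A : EuclideanSpace ℝ (Fin n) →L[ℝ] EuclideanSpace ℝ (Fin n) => A x) h
    simpa [hGapp] using this
  -- escape to uniformly separated isometries
  have hHex : ∀ k, ∃ H : EuclideanSpace ℝ (Fin n) →L[ℝ] EuclideanSpace ℝ (Fin n),
      (∃ m : ℕ, H = (G k) ^ m ∨ H = -((G k) ^ m)) ∧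
      1 / (C + 1) ≤ ‖H - 1‖ ∧ 1 / (C + 1) ≤ ‖H + 1‖ :=
    fun k => escape C hC (G k) (hbound k) (hGne1 k) (hGne2 k)
  choose H hHm hH1 hH2 using hHex
  have hHr : ∀ k x, r k (H k x) = r k x := by
    intro k x
    obtain ⟨m, hm | hm⟩ := hHm k
    · rw [hm]; exact hGrpow k m x
    · rw [hm]
      have h : (-((G k) ^ m)) x = -(((G k) ^ m) x) := rfl
      rw [h, hrneg, hGrpow]
  have hHb : ∀ k, ‖H k‖ ≤ C := by
    intro k
    obtain ⟨m, hm | hm⟩ := hHm k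
    · rw [hm]; exact hbound k m
    · rw [hm, norm_neg]; exact hbound k m
  -- compactness
  have hball : ∀ k, H k ∈ Metric.closedBall
      (0 : EuclideanSpace ℝ (Fin n) →L[ℝ] EuclideanSpace ℝ (Fin n)) C :=
    fun k => mem_closedBall_zero_iff.mpr (hHb k)
  obtain ⟨L, hLmem, φ, hφ, hLtend⟩ :=
    (isCompact_closedBall (0 : EuclideanSpace ℝ (Fin n) →L[ℝ] EuclideanSpace ℝ (Fin n)) C).tendsto_subseq hball
  -- μ tends to 1
  have hμto1 : Filter.Tendsto μ Filter.atTop (nhds 1) := by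
    have h1 : Filter.Tendsto (fun k : ℕ => multDist (Q (k + N)) q + 1 / (k + 1 : ℝ))
        Filter.atTop (nhds (1 + 0)) := by
      apply Filter.Tendsto.add
      · exact hconv.comp (Filter.tendsto_add_atTop_nat N)
      · exact tendsto_one_div_add_atTop_nhds_zero_nat
    rw [add_zero] at h1
    apply tendsto_of_tendsto_of_tendsto_of_le_of_le tendsto_const_nhds h1 hμ1
    intro k
    exact (hμlt k).le
  have hμφ : Filter.Tendsto (μ ∘ φ) Filter.atTop (nhds 1) :=
    hμto1.comp (StrictMono.tendsto_atTop hφ)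
  -- q is preserved by L
  have hqc : Continuous q := isnf_continuous hq
  have hLpres : ∀ x, q (L x) = q x := by
    intro x
    have hxk : Filter.Tendsto (fun j => H (φ j) x) Filter.atTop (nhds (L x)) :=
      ((ContinuousLinearMap.apply ℝ (EuclideanSpace ℝ (Fin n)) x).continuous.tendsto L).comp hLtend
    have hqk : Filter.Tendsto (fun j => q (H (φ j) x)) Filter.atTop (nhds (q (L x))) :=
      (hqc.tendsto (L x)).comp hxk
    have hub : ∀ k, q (H k x) ≤ μ k * q x := by
      intro k
      have h1 : q (H k x) ≤ μ k * r k (H k x) := hqr k (H k x)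
      rw [hHr k x] at h1
      have h2 : r k x ≤ q x := hrq k x
      nlinarith [hμ1 k]
    have hlb : ∀ k, q x ≤ μ k * q (H k x) := by
      intro k
      have h1 : q x ≤ μ k * r k x := hqr k x
      rw [← hHr k x] at h1
      have h2 : r k (H k x) ≤ q (H k x) := hrq k (H k x)
      nlinarith [hμ1 k]
    have hle1 : q (L x) ≤ q x := by
      have hg : Filter.Tendsto (fun j => μ (φ j) * q x) Filter.atTop (nhds (1 * q x)) :=
        hμφ.mul_const (q x)
      rw [one_mul] at hg
      exact le_of_tendsto_of_tendsto' hqk hg (fun j => hub (φ j))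
    have hle2 : q x ≤ q (L x) := by
      have hg : Filter.Tendsto (fun j => μ (φ j) * q (H (φ j) x))
          Filter.atTop (nhds (1 * q (L x))) := hμφ.mul hqk
      rw [one_mul] at hg
      exact le_of_tendsto_of_tendsto' tendsto_const_nhds hg (fun j => hlb (φ j))
    linarith
  -- L is far from ±1
  have hδpos : (0:ℝ) < 1 / (C + 1) := by positivity
  have hL1 : 1 / (C + 1) ≤ ‖L - 1‖ := by
    have ht : Filter.Tendsto (fun j => ‖(H ∘ φ) j - 1‖) Filter.atTop (nhds ‖L - 1‖) :=
      ((hLtend.sub tendsto_const_nhds).norm)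
    exact ge_of_tendsto' ht (fun j => hH1 (φ j))
  have hL2 : 1 / (C + 1) ≤ ‖L + 1‖ := by
    have ht : Filter.Tendsto (fun j => ‖(H ∘ φ) j + 1‖) Filter.atTop (nhds ‖L + 1‖) :=
      ((hLtend.add tendsto_const_nhds).norm)
    exact ge_of_tendsto' ht (fun j => hH2 (φ j))
  refine ⟨(L : EuclideanSpace ℝ (Fin n) →ₗ[ℝ] EuclideanSpace ℝ (Fin n)),
    fun x => hLpres x, ?_, ?_⟩
  · intro h
    have hLeq : L = 1 := by
      ext1 x
      have := congrArg (fun A : EuclideanSpace ℝ (Fin n) →ₗ[ℝ] EuclideanSpace ℝ (Fin n) => A x) h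
      simpa using this
    rw [hLeq] at hL1
    simp at hL1
    linarith
  · intro h
    have hLeq : L = -1 := by
      ext1 x
      have := congrArg (fun A : EuclideanSpace ℝ (Fin n) →ₗ[ℝ] EuclideanSpace ℝ (Fin n) => A x) h
      simpa using this
    rw [hLeq] at hL2
    have h0 : (-1 : EuclideanSpace ℝ (Fin n) →L[ℝ] EuclideanSpace ℝ (Fin n)) + 1 = 0 := by abel
    rw [h0] at hL2
    simp at hL2
    linarith
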